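/- If h : [0,∞) → ℝ is differentiable, h(t₀) ≥ 0, and ḣ(t) ≥ −γ · sign(h(t)) · |h(t)|^ρ for all t ≥ t₀ (with γ > 0, ρ ∈ [0,1)), then h(t) ≥ 0 for all t ≥ t₀ (forward invariance of the superzero-level set). -/
import Mathlib


/-- Forward invariance: if `h` is differentiable, `h t₀ ≥ 0`, and
`ḣ(t) ≥ −γ sign(h t) |h t|^ρ` for all `t ≥ t₀` (γ > 0, ρ ∈ [0,1)), then
`h t ≥ 0` for all `t ≥ t₀`. -/
theorem stmt_5 (γ ρ t₀ : ℝ) (hγ : 0 < γ) (hρ0 : 0 ≤ ρ) (hρ1 : ρ < 1)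
    (h : ℝ → ℝ) (hdiff : Differentiable ℝ h) (hinit : 0 ≤ h t₀)
    (hineq : ∀ t ≥ t₀, deriv h t ≥ -(γ * Real.sign (h t) * |h t| ^ ρ)) :
    ∀ t ≥ t₀, 0 ≤ h t := by
  by_contra hc
  push_neg at hc
  obtain ⟨t₁, ht₁, hneg⟩ := hc
  set S : Set ℝ := Set.Icc t₀ t₁ ∩ {t | 0 ≤ h t} with hS
  have hSclosed : IsClosed S :=
    isClosed_Icc.inter (isClosed_le continuous_const hdiff.continuous)
  have hSne : S.Nonempty := ⟨t₀, ⟨le_refl _, ht₁⟩, hinit⟩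
  have hSbdd : BddAbove S := ⟨t₁, fun x hx => hx.1.2⟩
  set s := sSup S with hs
  have hsS : s ∈ S := hSclosed.csSup_mem hSne hSbdd
  have hst₀ : t₀ ≤ s := hsS.1.1
  have hst₁ : s ≤ t₁ := hsS.1.2
  have hhs : 0 ≤ h s := hsS.2
  have hslt : s < t₁ := lt_of_le_of_ne hst₁ (fun heq => absurd hhs (by rw [heq]; exact not_le.2 hneg))
  have hnegIoc : ∀ t ∈ Set.Ioc s t₁, h t < 0 := by
    intro t ht
    by_contra hle
    push_neg at hle
    have : t ∈ S := ⟨⟨hst₀.trans ht.1.le, ht.2⟩, hle⟩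
    exact absurd (le_csSup hSbdd this) (not_le.2 ht.1)
  have hmono : MonotoneOn h (Set.Icc s t₁) := by
    apply monotoneOn_of_deriv_nonneg (convex_Icc s t₁) hdiff.continuous.continuousOn
      (fun x _ => (hdiff x).differentiableWithinAt)
    intro x hx
    rw [interior_Icc] at hx
    have hx0 : h x < 0 := hnegIoc x ⟨hx.1, hx.2.le⟩
    have := hineq x (hst₀.trans hx.1.le)
    rw [Real.sign_of_neg hx0] at this
    have hpos : 0 ≤ γ * |h x| ^ ρ :=
      mul_nonneg hγ.le (Real.rpow_nonneg (abs_nonneg _) _)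
    nlinarith
  have := hmono ⟨le_refl s, hst₁⟩ ⟨hst₁.trans_eq rfl |>.trans' (le_refl s), le_refl t₁⟩ hst₁
  -- h s ≤ h t₁
  linarith
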